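/- Let n be a positive integer, p > 1 a real number, and R > 0. Then ∫_{-R}^{R} | (n/p)·cos(πt/(2R)) + (π/(2R))·sin(πt/(2R)) |^p dt = ( n²/p² + π²/(4R²) )^{p/2} · ∫_{-R}^{R} ( cos(πt/(2R)) )^p dt. -/

import Mathlib

open Real

/-- The exact Rayleigh-quotient identity (5.2) for the test function
`f(t) = e^{-nt/p} cos(πt/(2R))` on the cylinder `(ℝ × N, dt² + e^{2t} g_N)`. -/
theorem cylinder_rayleigh_identity (n : ℕ) (hn : 0 < n) (p R : ℝ) (hp : 1 < p)
    (hR : 0 < R) :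
    ∫ t in (-R)..R, |((n : ℝ) / p) * Real.cos (π * t / (2 * R)) +
        (π / (2 * R)) * Real.sin (π * t / (2 * R))| ^ p =
      ((n : ℝ) ^ 2 / p ^ 2 + π ^ 2 / (4 * R ^ 2)) ^ (p / 2) *
        ∫ t in (-R)..R, Real.cos (π * t / (2 * R)) ^ p := by
  have hp0 : (0:ℝ) < p := lt_trans zero_lt_one hp
  set a : ℝ := (n:ℝ)/p with ha_def
  set b : ℝ := π/(2*R) with hb_def
  have ha : 0 < a := div_pos (by exact_mod_cast hn) hp0
  have hb : 0 < b := div_pos pi_pos (by linarith)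
  set A : ℝ := Real.sqrt (a^2 + b^2) with hA_def
  have hA2 : A^2 = a^2 + b^2 := Real.sq_sqrt (by positivity)
  have hA : 0 < A := Real.sqrt_pos.mpr (by positivity)
  set φ : ℝ := Real.arccos (a/A) with hφ_def
  have haA : a ≤ A := by nlinarith
  have hcos : Real.cos φ = a/A := by
    rw [hφ_def]
    exact Real.cos_arccos (by nlinarith [div_pos ha hA]) ((div_le_one hA).mpr haA)
  have hsin : Real.sin φ = b/A := by
    rw [hφ_def, Real.sin_arccos]
    have h1 : 1 - (a/A)^2 = (b/A)^2 := by
      field_simp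
      nlinarith
    rw [h1, Real.sqrt_sq (le_of_lt (div_pos hb hA))]
  have key : ∀ θ : ℝ, a * Real.cos θ + b * Real.sin θ = A * Real.cos (θ - φ) := by
    intro θ
    rw [Real.cos_sub, hcos, hsin]
    field_simp
  have harg : ∀ t : ℝ, π * t / (2*R) = b * t := by
    intro t; rw [hb_def]; ring
  have hbR : b * R = π/2 := by
    rw [hb_def]; field_simp
  -- periodic function
  set g : ℝ → ℝ := fun u => |Real.cos u| ^ p with hg_def
  have hper : Function.Periodic g π := by
    intro x
    simp only [hg_def, Real.cos_add_pi, abs_neg]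
  -- Step 1: rewrite LHS integrand
  have step1 : ∫ t in (-R)..R, |a * Real.cos (π * t / (2*R)) +
      b * Real.sin (π * t / (2*R))| ^ p = A ^ p * ∫ t in (-R)..R, g (b * t - φ) := by
    rw [← intervalIntegral.integral_const_mul]
    apply intervalIntegral.integral_congr
    intro t _
    simp only [harg t, key (b*t), hg_def]
    rw [abs_mul, abs_of_pos hA, Real.mul_rpow (le_of_lt hA) (abs_nonneg _)]
  -- Step 2: substitution and periodicity
  have step2 : ∫ t in (-R)..R, g (b * t - φ) = ∫ t in (-R)..R, g (b * t) := by
    rw [intervalIntegral.integral_comp_mul_sub g hb.ne' φ,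
        intervalIntegral.integral_comp_mul_left g hb.ne']
    congr 1
    have e1 : b * (-R) - φ = (-(π/2) - φ) := by rw [mul_neg, hbR]
    have e2 : b * R - φ = (-(π/2) - φ) + π := by rw [hbR]; ring
    have e3 : b * (-R) = -(π/2) := by rw [mul_neg, hbR]
    have e4 : b * R = -(π/2) + π := by rw [hbR]; ring
    rw [e1, e2, e3, e4]
    exact hper.intervalIntegral_add_eq (-(π/2) - φ) (-(π/2))
  -- Step 3: drop abs
  have step3 : ∫ t in (-R)..R, g (b * t) = ∫ t in (-R)..R, Real.cos (π * t / (2*R)) ^ p := by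
    apply intervalIntegral.integral_congr
    intro t ht
    rw [Set.uIcc_of_le (by linarith : -R ≤ R)] at ht
    have h1 : -(π/2) ≤ b * t := by
      have := mul_le_mul_of_nonneg_left ht.1 hb.le
      rw [mul_neg, hbR] at this; linarith
    have h2 : b * t ≤ π/2 := by
      have := mul_le_mul_of_nonneg_left ht.2 hb.le
      rw [hbR] at this; linarith
    have hc : 0 ≤ Real.cos (b * t) :=
      Real.cos_nonneg_of_mem_Icc ⟨by linarith, h2⟩
    simp only [hg_def, harg t, abs_of_nonneg hc]
  -- Step 4: the constant
  have step4 : A ^ p = ((n:ℝ)^2/p^2 + π^2/(4*R^2)) ^ (p/2) := by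
    have hab : a^2 + b^2 = (n:ℝ)^2/p^2 + π^2/(4*R^2) := by
      rw [ha_def, hb_def]
      field_simp
      ring
    rw [hA_def, ← hab, Real.sqrt_eq_rpow, ← Real.rpow_mul (by positivity)]
    congr 1
    ring
  calc ∫ t in (-R)..R, |a * Real.cos (π * t / (2*R)) +
      b * Real.sin (π * t / (2*R))| ^ p
      = A ^ p * ∫ t in (-R)..R, g (b * t - φ) := step1
    _ = A ^ p * ∫ t in (-R)..R, Real.cos (π * t / (2*R)) ^ p := by rw [step2, step3]
    _ = _ := by rw [step4]
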